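/- For every t > 0, the second derivative of log Γ at t+1 equals ∑_{ℓ=0}^∞ 1/(t+1+ℓ)². -/

import Mathlib

open Real Filter Topology Set

local notation "γ" => Real.eulerMascheroniConstant

private lemma aux_min_mul (c : ℝ) (hc : 0 < c) (k : ℕ) :
    min c 1 * (k + 1) ≤ c + k := by
  rcases le_total c 1 with h | h
  · rw [min_eq_left h]
    nlinarith [Nat.cast_nonneg (α := ℝ) k]
  · rw [min_eq_right h]
    nlinarith [Nat.cast_nonneg (α := ℝ) k]

private lemma summable_base : Summable (fun k : ℕ => 1 / ((k : ℝ) + 1) ^ 2) := by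
  have h1 : Summable (fun n : ℕ => 1 / (n : ℝ) ^ 2) :=
    Real.summable_one_div_nat_pow.mpr one_lt_two
  have h2 := (summable_nat_add_iff 1).mpr h1
  exact h2.congr fun n => by push_cast; ring

private lemma summable_inv_sq (c : ℝ) (hc : 0 < c) :
    Summable (fun k : ℕ => 1 / (c + k) ^ 2) := by
  have hm : 0 < min c 1 := lt_min hc one_pos
  refine Summable.of_nonneg_of_le (fun k => by positivity) (fun k => ?_)
    (summable_base.mul_left (1 / (min c 1) ^ 2))
  have h2 : min c 1 * (k + 1) ≤ c + k := aux_min_mul c hc k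
  calc 1 / (c + k) ^ 2 ≤ 1 / (min c 1 * (k + 1)) ^ 2 := by
        apply one_div_le_one_div_of_le (by positivity)
        exact pow_le_pow_left₀ (by positivity) h2 2
    _ = 1 / (min c 1) ^ 2 * (1 / ((k : ℝ) + 1) ^ 2) := by
        rw [mul_pow, one_div_mul_one_div]

private lemma summable_term (x : ℝ) (hx : 0 < x) :
    Summable (fun k : ℕ => 1 / ((k : ℝ) + 1) - 1 / (x + k)) := by
  have hm : 0 < min x 1 := lt_min hx one_pos
  refine Summable.of_norm_bounded
    (g := fun k : ℕ => (|x - 1| / min x 1) * (1 / ((k : ℝ) + 1) ^ 2))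
    (summable_base.mul_left _) (fun k => ?_)
  have hk1 : (0 : ℝ) < (k : ℝ) + 1 := by positivity
  have hxk : (0 : ℝ) < x + k := by positivity
  have key : 1 / ((k : ℝ) + 1) - 1 / (x + k) = (x - 1) / (((k : ℝ) + 1) * (x + k)) := by
    field_simp
    ring
  rw [key, Real.norm_eq_abs, abs_div,
    abs_of_pos (show (0:ℝ) < ((k : ℝ) + 1) * (x + k) by positivity)]
  have h2 : min x 1 * ((k : ℝ) + 1) ≤ x + k := aux_min_mul x hx k
  have h3 : min x 1 * ((k : ℝ) + 1) ^ 2 ≤ ((k : ℝ) + 1) * (x + k) := by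
    calc min x 1 * ((k : ℝ) + 1) ^ 2 = ((k : ℝ) + 1) * (min x 1 * ((k : ℝ) + 1)) := by ring
      _ ≤ ((k : ℝ) + 1) * (x + k) := mul_le_mul_of_nonneg_left h2 hk1.le
  calc |x - 1| / (((k : ℝ) + 1) * (x + k)) ≤ |x - 1| / (min x 1 * ((k : ℝ) + 1) ^ 2) :=
        div_le_div_of_nonneg_left (abs_nonneg _) (by positivity) h3
    _ = |x - 1| / min x 1 * (1 / ((k : ℝ) + 1) ^ 2) := by
        rw [div_mul_div_comm, mul_one]

private lemma harmonic_cast (n : ℕ) :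
    ((harmonic n : ℚ) : ℝ) = ∑ k ∈ Finset.range n, 1 / ((k : ℝ) + 1) := by
  rw [harmonic]
  push_cast
  simp [one_div]

/-- Digamma series. -/
private lemma digamma_series (x : ℝ) (hx : 0 < x) :
    deriv (fun s : ℝ => Real.log (Real.Gamma s)) x
      = -γ + ∑' k : ℕ, (1 / ((k : ℝ) + 1) - 1 / (x + k)) := by
  set f : ℝ → ℝ := fun s => Real.log (Real.Gamma s) with hfdef
  have hc : ConvexOn ℝ (Ioi 0) f := convexOn_log_Gamma
  have h_rec : ∀ y : ℝ, 0 < y → f (y + 1) = f y + log y := by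
    intro y hy
    simp only [f]
    rw [Gamma_add_one hy.ne', log_mul hy.ne' (Gamma_pos_of_pos hy).ne', add_comm]
  have hder : ∀ {y : ℝ}, 0 < y → DifferentiableAt ℝ f y := by
    intro y hy
    refine (differentiableAt_Gamma ?_).log (Gamma_pos_of_pos hy).ne'
    exact fun m => ne_of_gt (lt_of_le_of_lt (neg_nonpos.mpr m.cast_nonneg) hy)
  have hder_rec : ∀ y : ℝ, 0 < y → deriv f (y + 1) = deriv f y + 1 / y := by
    intro y hy
    rw [← deriv_comp_add_const, one_div, ← Real.deriv_log,
      ← deriv_add (hder hy) (differentiableAt_log hy.ne')]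
    apply Filter.EventuallyEq.deriv_eq
    filter_upwards [eventually_gt_nhds hy] with z hz using h_rec z hz
  have hder_nat : ∀ n : ℕ, deriv f (x + n) = deriv f x + ∑ k ∈ Finset.range n, 1 / (x + k) := by
    intro n
    induction n with
    | zero => simp
    | succ n ih =>
      have hcast : x + ((n : ℕ) + 1 : ℕ) = (x + n) + 1 := by push_cast; ring
      rw [hcast, hder_rec _ (by positivity), ih, Finset.sum_range_succ]
      ring
  have hS : Summable (fun k : ℕ => 1 / ((k : ℝ) + 1) - 1 / (x + k)) := summable_term x hx
  set S := ∑' k : ℕ, (1 / ((k : ℝ) + 1) - 1 / (x + k)) with hSdef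
  have tend1 : Tendsto (fun n : ℕ => ∑ k ∈ Finset.range n, (1 / ((k : ℝ) + 1) - 1 / (x + k)))
      atTop (𝓝 S) := hS.hasSum.tendsto_sum_nat
  have tend2 : Tendsto (fun n : ℕ => ((harmonic n : ℚ) : ℝ) - log n) atTop (𝓝 γ) :=
    Real.tendsto_harmonic_sub_log
  -- squeeze for deriv f (x + n) - log n → 0
  have lowlim : Tendsto (fun n : ℕ => log (x + n - 1) - log n) atTop (𝓝 0) := by
    have h0 : Tendsto (fun n : ℕ => 1 + (x - 1) / n) atTop (𝓝 1) := by
      have := (tendsto_const_nhds (x := x - 1) (f := atTop (α := ℕ))).div_atTop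
        tendsto_natCast_atTop_atTop
      simpa using (this.const_add 1)
    have h1 : Tendsto (fun n : ℕ => log (1 + (x - 1) / n)) atTop (𝓝 0) := by
      have := (Real.continuousAt_log one_ne_zero).tendsto.comp h0
      simpa [Function.comp_def] using this
    apply h1.congr'
    filter_upwards [eventually_ge_atTop 1] with n hn
    have hn' : (1 : ℝ) ≤ n := by exact_mod_cast hn
    have hnpos : (0 : ℝ) < n := by linarith
    have hxn : (0 : ℝ) < x + n - 1 := by linarith
    rw [show 1 + (x - 1) / (n : ℝ) = (x + n - 1) / n by field_simp; ring,
      log_div hxn.ne' hnpos.ne']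
  have uplim : Tendsto (fun n : ℕ => log (x + n) - log n) atTop (𝓝 0) := by
    have h0 : Tendsto (fun n : ℕ => 1 + x / n) atTop (𝓝 1) := by
      have := (tendsto_const_nhds (x := x) (f := atTop (α := ℕ))).div_atTop
        tendsto_natCast_atTop_atTop
      simpa using (this.const_add 1)
    have h1 : Tendsto (fun n : ℕ => log (1 + x / n)) atTop (𝓝 0) := by
      have := (Real.continuousAt_log one_ne_zero).tendsto.comp h0
      simpa [Function.comp_def] using this
    apply h1.congr'
    filter_upwards [eventually_ge_atTop 1] with n hn
    have hn' : (1 : ℝ) ≤ n := by exact_mod_cast hn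
    have hnpos : (0 : ℝ) < n := by linarith
    have hxn : (0 : ℝ) < x + n := by linarith
    rw [show 1 + x / (n : ℝ) = (x + n) / n by field_simp; ring,
      log_div hxn.ne' hnpos.ne']
  have tend3 : Tendsto (fun n : ℕ => deriv f (x + n) - log n) atTop (𝓝 0) := by
    refine tendsto_of_tendsto_of_tendsto_of_le_of_le' lowlim uplim ?_ ?_
    · filter_upwards [eventually_ge_atTop 1] with n hn
      have hn' : (1 : ℝ) ≤ n := by exact_mod_cast hn
      have ha : (0 : ℝ) < x + n - 1 := by linarith
      have hb : (0 : ℝ) < x + n := by linarith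
      have heq : f (x + n) - f (x + n - 1) = log (x + n - 1) := by
        have h := h_rec (x + n - 1) ha
        rw [sub_add_cancel] at h
        rw [h]; ring
      have hslope : log (x + n - 1) = slope f (x + n - 1) (x + n) := by
        rw [slope_def_field, show x + (n : ℝ) - (x + n - 1) = 1 by ring, div_one, heq]
      have := hc.slope_le_deriv (mem_Ioi.mpr ha) (mem_Ioi.mpr hb) (by linarith) (hder hb)
      rw [← hslope] at this
      linarith
    · filter_upwards with n
      have hb : (0 : ℝ) < x + n := by positivity
      have hb1 : (0 : ℝ) < x + n + 1 := by linarith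
      have heq : f (x + n + 1) - f (x + n) = log (x + n) := by
        rw [h_rec (x + n) hb]; ring
      have hslope : log (x + n) = slope f (x + n) (x + n + 1) := by
        rw [slope_def_field, show x + (n : ℝ) + 1 - (x + n) = 1 by ring, div_one, heq]
      have := hc.deriv_le_slope (mem_Ioi.mpr hb) (mem_Ioi.mpr hb1) (by linarith) (hder hb)
      rw [← hslope] at this
      linarith
  have congr_eq : ∀ n : ℕ,
      (deriv f (x + n) - log n) + (∑ k ∈ Finset.range n, (1 / ((k : ℝ) + 1) - 1 / (x + k)))
        - (((harmonic n : ℚ) : ℝ) - log n) = deriv f x := by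
    intro n
    rw [hder_nat n, Finset.sum_sub_distrib, harmonic_cast]
    ring
  have final : Tendsto (fun _ : ℕ => deriv f x) atTop (𝓝 (0 + S - γ)) :=
    (((tend3.add tend1).sub tend2)).congr congr_eq
  have := tendsto_nhds_unique tendsto_const_nhds final
  rw [this]; ring

theorem trigamma_series (t : ℝ) (ht : 0 < t) :
    deriv (deriv (fun s : ℝ => Real.log (Real.Gamma s))) (t + 1)
      = ∑' ℓ : ℕ, 1 / (t + 1 + (ℓ : ℝ)) ^ 2 := by
  have h1 : (0 : ℝ) < t + 1 := by linarith
  have hev : deriv (fun s : ℝ => Real.log (Real.Gamma s)) =ᶠ[𝓝 (t + 1)]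
      (fun z => -γ + ∑' k : ℕ, (1 / ((k : ℝ) + 1) - 1 / (z + k))) := by
    filter_upwards [eventually_gt_nhds h1] with z hz using digamma_series z hz
  rw [hev.deriv_eq]
  have hc2 : (0 : ℝ) < (t + 1) / 2 := by linarith
  have hu : Summable (fun k : ℕ => 1 / ((t + 1) / 2 + k) ^ 2) := summable_inv_sq _ hc2
  have hterm : ∀ (k : ℕ) (z : ℝ), z ∈ Ioi ((t + 1) / 2) →
      HasDerivAt (fun z : ℝ => 1 / ((k : ℝ) + 1) - 1 / (z + k)) (1 / (z + k) ^ 2) z := by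
    intro k z hz
    have hz' : (t + 1) / 2 < z := hz
    have hz0 : (0 : ℝ) < z + k := by
      have : (0 : ℝ) ≤ (k : ℝ) := Nat.cast_nonneg k
      linarith
    have h := ((hasDerivAt_id z).add_const (k : ℝ)).inv hz0.ne'
    have h2 := h.const_sub (1 / ((k : ℝ) + 1))
    have h3 : HasDerivAt (fun y : ℝ => 1 / ((k : ℝ) + 1) - 1 / (y + k))
        (-(-1 / (z + (k : ℝ)) ^ 2)) z := by
      simpa only [one_div, id_eq, Pi.inv_apply] using h2
    exact h3.congr_deriv (by ring)
  have hbound : ∀ (k : ℕ) (z : ℝ), z ∈ Ioi ((t + 1) / 2) →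
      ‖1 / (z + k) ^ 2‖ ≤ 1 / ((t + 1) / 2 + k) ^ 2 := by
    intro k z hz
    have hz' : (t + 1) / 2 < z := hz
    have hk : (0 : ℝ) ≤ (k : ℝ) := Nat.cast_nonneg k
    have hz0 : (0 : ℝ) < z + k := by linarith
    rw [Real.norm_eq_abs, abs_of_pos (by positivity)]
    apply one_div_le_one_div_of_le (by positivity)
    exact pow_le_pow_left₀ (by positivity) (by linarith) 2
  have hmem : t + 1 ∈ Ioi ((t + 1) / 2) := by
    simp only [mem_Ioi]; linarith
  have hsum0 : Summable (fun k : ℕ => 1 / ((k : ℝ) + 1) - 1 / ((t + 1) + k)) :=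
    summable_term _ h1
  have hder := hasDerivAt_tsum_of_isPreconnected hu isOpen_Ioi
    (convex_Ioi _).isPreconnected hterm hbound hmem hsum0 hmem
  rw [deriv_const_add]
  exact hder.deriv
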